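/- Stick-breaking weights sum to one almost surely: if β₁, β₂, … are i.i.d. Beta(1,α) with α > 0 and πⱼ = βⱼ ∏_{i<j}(1 − βᵢ), then ∑_{j=1}^∞ πⱼ = 1 almost surely. -/

import Mathlib

open MeasureTheory ProbabilityTheory

/-- The Beta distribution `Beta(a, b)` on `[0,1]`, with density
`x^(a-1) (1-x)^(b-1) / B(a,b)` with respect to Lebesgue measure, where
`B(a,b) = Γ(a)Γ(b)/Γ(a+b)`. -/
noncomputable def betaMeasure (a b : ℝ) : Measure ℝ :=
  (volume : Measure ℝ).withDensity fun x =>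
    ENNReal.ofReal
      (Set.indicator (Set.Ioo (0 : ℝ) 1)
        (fun x =>
          x ^ (a - 1) * (1 - x) ^ (b - 1) *
            (Real.Gamma (a + b) / (Real.Gamma a * Real.Gamma b))) x)

lemma stick_sum_range_eq (g : ℕ → ℝ) (n : ℕ) :
    ∑ j ∈ Finset.range n, g j * ∏ i ∈ Finset.range j, (1 - g i)
      = 1 - ∏ j ∈ Finset.range n, (1 - g j) := by
  induction n with
  | zero => simp
  | succ n ih => rw [Finset.sum_range_succ, Finset.prod_range_succ, ih]; ring

/-- Stick-breaking weights sum to one almost surely: if `β₁, β₂, …` are i.i.d. `Beta(1, α)`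
with `α > 0` and `πⱼ = βⱼ ∏_{i<j} (1 - βᵢ)`, then `∑_{j} πⱼ = 1` almost surely. -/
theorem stickBreaking_weights_sum_one {Ω : Type*} [MeasurableSpace Ω]
    (P : Measure Ω) [IsProbabilityMeasure P] (α : ℝ) (hα : 0 < α)
    (B : ℕ → Ω → ℝ) (hBmeas : ∀ i, Measurable (B i))
    (hindep : iIndepFun B P)
    (hlaw : ∀ i, Measure.map (B i) P = _root_.betaMeasure 1 α) :
    ∀ᵐ ω ∂P, (∑' j, B j ω * ∏ i ∈ Finset.range j, (1 - B i ω)) = 1 := by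
  classical
  -- a.e. each B i lands in (0,1)
  have hIoo : ∀ i, ∀ᵐ ω ∂P, B i ω ∈ Set.Ioo (0 : ℝ) 1 := by
    intro i
    rw [ae_iff]
    have hset : {ω | ¬ B i ω ∈ Set.Ioo (0 : ℝ) 1} = B i ⁻¹' (Set.Ioo (0 : ℝ) 1)ᶜ := rfl
    rw [hset, ← Measure.map_apply (hBmeas i) measurableSet_Ioo.compl, hlaw i, _root_.betaMeasure,
      withDensity_apply _ measurableSet_Ioo.compl]
    calc (∫⁻ x in (Set.Ioo (0:ℝ) 1)ᶜ, ENNReal.ofReal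
          ((Set.Ioo (0:ℝ) 1).indicator (fun x =>
            x ^ ((1:ℝ) - 1) * (1 - x) ^ (α - 1) *
              (Real.Gamma (1 + α) / (Real.Gamma 1 * Real.Gamma α))) x) ∂volume)
        = ∫⁻ _ in (Set.Ioo (0:ℝ) 1)ᶜ, 0 ∂volume :=
          setLIntegral_congr_fun measurableSet_Ioo.compl
            (fun x hx => by
              simp [Set.indicator_of_notMem hx])
      _ = 0 := lintegral_zero
  have hgood : ∀ᵐ ω ∂P, ∀ i, B i ω ∈ Set.Ioo (0 : ℝ) 1 := ae_all_iff.2 hIoo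
  set f : ℕ → Ω → ℝ := fun i ω => 1 - B i ω with hfdef
  have hfmeas : ∀ i, Measurable (f i) := fun i => measurable_const.sub (hBmeas i)
  have hf_indep : iIndepFun f P :=
    hindep.comp (fun _ x => 1 - x) (fun _ => measurable_const.sub measurable_id)
  have hfint : ∀ i, Integrable (f i) P := by
    intro i
    refine (integrable_const (1 : ℝ)).mono' (hfmeas i).aestronglyMeasurable ?_
    filter_upwards [hIoo i] with ω h
    have : |1 - B i ω| ≤ 1 := abs_le.2 ⟨by linarith [h.2], by linarith [h.1]⟩
    simpa [hfdef, Real.norm_eq_abs] using this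
  have hBint : Integrable (B 0) P := by
    refine (integrable_const (1 : ℝ)).mono' (hBmeas 0).aestronglyMeasurable ?_
    filter_upwards [hIoo 0] with ω h
    rw [Real.norm_eq_abs, abs_le]
    exact ⟨by linarith [h.1], h.2.le⟩
  set c : ℝ := ∫ x, (1 - x) ∂(_root_.betaMeasure 1 α) with hcdef
  have key : ∀ i, ∫ ω, f i ω ∂P = c := by
    intro i
    rw [hcdef, ← hlaw i, integral_map (hBmeas i).aemeasurable]
    exact (measurable_const.sub measurable_id).aestronglyMeasurable
  have hc0 : 0 ≤ c := by
    rw [← key 0]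
    refine integral_nonneg_of_ae ?_
    filter_upwards [hIoo 0] with ω h
    have : (0:ℝ) ≤ 1 - B 0 ω := by linarith [h.2]
    simpa [hfdef] using this
  have hc1 : c < 1 := by
    have hcsub : c = 1 - ∫ ω, B 0 ω ∂P := by
      rw [← key 0]
      simp only [hfdef]
      rw [integral_sub (integrable_const 1) hBint, integral_const]
      simp
    have hpos : 0 < ∫ ω, B 0 ω ∂P := by
      rw [integral_pos_iff_support_of_nonneg_ae
        ((hIoo 0).mono fun ω h => h.1.le) hBint]
      by_contra hz
      push_neg at hz
      have hz0 : P (Function.support (B 0)) = 0 := le_antisymm hz zero_le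
      have h1 : ∀ᵐ ω ∂P, ω ∈ Function.support (B 0) :=
        (hIoo 0).mono fun ω h => ne_of_gt h.1
      have h2 : ∀ᵐ ω ∂P, ω ∉ Function.support (B 0) := measure_eq_zero_iff_ae_notMem.1 hz0
      rcases (h1.and h2).exists with ⟨ω, hmem, hnmem⟩
      exact hnmem hmem
    linarith
  -- partial products
  set X : ℕ → Ω → ℝ := fun n ω => ∏ i ∈ Finset.range n, f i ω with hXdef
  have hXmeas : ∀ n, Measurable (X n) := fun n =>
    Finset.measurable_prod _ (fun i _ => hfmeas i)
  have hXbound : ∀ n, ∀ᵐ ω ∂P, X n ω ∈ Set.Icc (0 : ℝ) 1 := by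
    intro n
    filter_upwards [hgood] with ω h
    constructor
    · exact Finset.prod_nonneg fun i _ => by simp [hfdef]; linarith [(h i).2]
    · exact Finset.prod_le_one (fun i _ => by simp [hfdef]; linarith [(h i).2])
        (fun i _ => by simp [hfdef]; linarith [(h i).1])
  have hXint : ∀ n, Integrable (X n) P := by
    intro n
    refine (integrable_const (1 : ℝ)).mono' (hXmeas n).aestronglyMeasurable ?_
    filter_upwards [hXbound n] with ω h
    rw [Real.norm_eq_abs, abs_le]
    exact ⟨by linarith [h.1], h.2⟩
  have hXint_eq : ∀ n, ∫ ω, X n ω ∂P = c ^ n := by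
    intro n
    induction n with
    | zero => simp [hXdef]
    | succ n ih =>
      have hind : IndepFun (∏ i ∈ Finset.range n, f i) (f n) P :=
        hf_indep.indepFun_prod_range_succ hfmeas n
      have hprodeq : (∏ i ∈ Finset.range n, f i) = X n := by
        funext ω; simp [hXdef]
      rw [hprodeq] at hind
      have hXsucc : X (n + 1) = X n * f n := by
        funext ω; simp [hXdef, Finset.prod_range_succ]
      have hmul := hind.integral_mul_eq_mul_integral (hXint n).aestronglyMeasurable (hfint n).aestronglyMeasurable
      calc ∫ ω, X (n + 1) ω ∂P = ∫ ω, (X n * f n) ω ∂P := by rw [hXsucc]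
        _ = (∫ ω, X n ω ∂P) * ∫ ω, f n ω ∂P := hmul
        _ = c ^ (n + 1) := by rw [ih, key n, pow_succ]
  -- lintegral of infimum is zero
  set L : Ω → ENNReal := fun ω => ⨅ n, ENNReal.ofReal (X n ω) with hLdef
  have hLmeas : Measurable L :=
    Measurable.iInf fun n => (hXmeas n).ennreal_ofReal
  have hL0 : ∀ᵐ ω ∂P, L ω = 0 := by
    have hle : ∀ n, ∫⁻ ω, L ω ∂P ≤ ENNReal.ofReal (c ^ n) := by
      intro n
      calc ∫⁻ ω, L ω ∂P ≤ ∫⁻ ω, ENNReal.ofReal (X n ω) ∂P :=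
            lintegral_mono fun ω => iInf_le _ n
        _ = ENNReal.ofReal (∫ ω, X n ω ∂P) := by
            rw [← ofReal_integral_eq_lintegral_ofReal (hXint n)
              ((hXbound n).mono fun ω h => h.1)]
        _ = ENNReal.ofReal (c ^ n) := by rw [hXint_eq n]
    have htend : Filter.Tendsto (fun n => ENNReal.ofReal (c ^ n)) Filter.atTop (nhds 0) := by
      rw [← ENNReal.ofReal_zero]
      exact (ENNReal.continuous_ofReal.tendsto 0).comp
        (tendsto_pow_atTop_nhds_zero_of_lt_one hc0 hc1)
    have hzero : ∫⁻ ω, L ω ∂P = 0 :=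
      le_antisymm (ge_of_tendsto' htend hle) zero_le
    exact (lintegral_eq_zero_iff hLmeas).1 hzero
  -- conclude
  filter_upwards [hgood, hL0] with ω hω hLω
  -- the real infimum of X n ω is 0
  have hXnonneg : ∀ n, 0 ≤ X n ω :=
    fun n => Finset.prod_nonneg fun i _ => by simp [hfdef]; linarith [(hω i).2]
  have hanti : Antitone fun n => X n ω := by
    refine antitone_nat_of_succ_le fun n => ?_
    have : X (n + 1) ω = X n ω * f n ω := by simp [hXdef, Finset.prod_range_succ]
    rw [this]
    have h1 : f n ω ≤ 1 := by simp [hfdef]; linarith [(hω n).1]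
    calc X n ω * f n ω ≤ X n ω * 1 :=
          mul_le_mul_of_nonneg_left h1 (hXnonneg n)
      _ = X n ω := mul_one _
  have hbdd : BddBelow (Set.range fun n => X n ω) :=
    ⟨0, by rintro x ⟨n, rfl⟩; exact hXnonneg n⟩
  have hci : (⨅ n, X n ω) = 0 := by
    have hle : ∀ n, (⨅ n, X n ω) ≤ X n ω := fun n => ciInf_le hbdd n
    have h1 : ENNReal.ofReal (⨅ n, X n ω) ≤ L ω :=
      le_iInf fun n => ENNReal.ofReal_le_ofReal (hle n)
    rw [hLω] at h1
    have h2 : (⨅ n, X n ω) ≤ 0 := ENNReal.ofReal_eq_zero.1 (le_antisymm h1 zero_le)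
    exact le_antisymm h2 (le_ciInf hXnonneg)
  have htendX : Filter.Tendsto (fun n => X n ω) Filter.atTop (nhds 0) := by
    have := tendsto_atTop_ciInf hanti hbdd
    rwa [hci] at this
  -- partial sums converge to 1
  have hps : Filter.Tendsto
      (fun n => ∑ j ∈ Finset.range n, B j ω * ∏ i ∈ Finset.range j, (1 - B i ω))
      Filter.atTop (nhds 1) := by
    have heq : (fun n => ∑ j ∈ Finset.range n, B j ω * ∏ i ∈ Finset.range j, (1 - B i ω))
        = fun n => 1 - X n ω := by
      funext n
      rw [stick_sum_range_eq (fun j => B j ω) n]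
    rw [heq]
    have := htendX.const_sub 1
    simpa using this
  have hterm_nonneg : ∀ j, 0 ≤ B j ω * ∏ i ∈ Finset.range j, (1 - B i ω) := by
    intro j
    refine mul_nonneg (hω j).1.le (Finset.prod_nonneg fun i _ => by linarith [(hω i).2])
  exact ((hasSum_iff_tendsto_nat_of_nonneg hterm_nonneg 1).2 hps).tsum_eq
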